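/- Let γ > 0, N ≥ 1, C² = 4N, d ∈ {2,3,4}, and z_ℓ(γ) = (1/𝒩_C) ∫_{(-π,π]^N} exp(-2C²(d-1)γ Σⱼ λⱼ²) Π_{j<k}|e^{iλⱼ} - e^{iλ_k}|² d^N λ, with 𝒩_C = (2π)^N N!. Then for γ ≥ 1/g₀² (with g₀ > 0 fixed), z_ℓ(γ) ≥ γ^{-N²/2} 𝒩_C^{-1} (4/π²)^{N(N-1)/2} [2(d-1)C²]^{-N²/2} I₂(π√(2(d-1)C²)/(2g₀)) > 0, where I₂(u) = ∫_{(-u,u)^N} e^{-Σ yⱼ²} Π_{j<k}(yⱼ-y_k)² d^N y. -/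

import Mathlib

open Real MeasureTheory Finset
open scoped Pointwise

noncomputable def GUEIntegral (N : ℕ) (u : ℝ) : ℝ :=
  ∫ y in Set.univ.pi (fun _ : Fin N => Set.Ioo (-u) u),
    Real.exp (-∑ j, y j ^ 2) *
      ∏ p ∈ Finset.univ.filter (fun p : Fin N × Fin N => p.1 < p.2), (y p.1 - y p.2) ^ 2

/-! ### Auxiliary lemmas -/

lemma cardpairs (N : ℕ) :
    ((Finset.univ.filter (fun p : Fin N × Fin N => p.1 < p.2))).card = N * (N - 1) / 2 := by
  have h1 : ((Finset.univ.filter (fun p : Fin N × Fin N => p.1 < p.2))).card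
      = ∑ a : Fin N, (Finset.univ.filter (fun b : Fin N => a < b)).card := by
    rw [Finset.card_eq_sum_card_fiberwise (f := Prod.fst) (t := Finset.univ)
      (fun _ _ => Finset.mem_univ _)]
    refine Finset.sum_congr rfl fun a _ => ?_
    have h : Finset.filter (fun p : Fin N × Fin N => p.1 = a)
          (Finset.univ.filter (fun p : Fin N × Fin N => p.1 < p.2))
        = (Finset.univ.filter (fun b : Fin N => a < b)).map
            ⟨fun b => (a, b), fun x y h => (Prod.mk.injEq _ _ _ _ ▸ h).2⟩ := by
      ext p
      simp only [Finset.mem_filter, Finset.mem_map, Finset.mem_univ, true_and,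
        Function.Embedding.coeFn_mk]
      constructor
      · rintro ⟨hlt, rfl⟩; exact ⟨p.2, hlt, rfl⟩
      · rintro ⟨b, hb, rfl⟩; exact ⟨hb, rfl⟩
    rw [h, Finset.card_map]
  have h2 : ∀ a : Fin N, (Finset.univ.filter (fun b : Fin N => a < b)).card = N - 1 - a := by
    intro a
    rw [← Fin.card_Ioi a]
    congr 1
    ext b; simp [Finset.mem_Ioi]
  rw [h1]
  simp only [h2]
  rw [Fin.sum_univ_eq_sum_range (fun i => N - 1 - i)]
  rw [Finset.sum_range_reflect (fun i => i) N]
  exact Finset.sum_range_id N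

lemma abs_exp_sub_sq (a b : ℝ) :
    (‖Complex.exp (Complex.I * a) - Complex.exp (Complex.I * b)‖) ^ 2
      = 2 - 2 * Real.cos (a - b) := by
  rw [Complex.sq_norm]
  rw [mul_comm Complex.I (a : ℂ), mul_comm Complex.I (b : ℂ), Complex.exp_mul_I,
    Complex.exp_mul_I]
  simp only [Complex.normSq_apply, Complex.add_re, Complex.add_im, Complex.mul_re, Complex.mul_im,
    Complex.I_re, Complex.I_im, Complex.cos_ofReal_re, Complex.sin_ofReal_re,
    Complex.cos_ofReal_im, Complex.sin_ofReal_im, Complex.sub_re, Complex.sub_im]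
  ring_nf
  rw [Real.cos_sub]
  nlinarith [Real.sin_sq_add_cos_sq a, Real.sin_sq_add_cos_sq b]

lemma key_sin (a b : ℝ) (ha : |a| ≤ π / 2) (hb : |b| ≤ π / 2) :
    4 / π ^ 2 * (a - b) ^ 2
      ≤ (‖Complex.exp (Complex.I * a) - Complex.exp (Complex.I * b)‖) ^ 2 := by
  rw [abs_exp_sub_sq]
  have hπ : 0 < π := Real.pi_pos
  set x : ℝ := (a - b) / 2 with hx
  have h1 : Real.cos (a - b) = 1 - 2 * Real.sin x ^ 2 := by
    have h := Real.cos_two_mul' x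
    have h2 := Real.cos_sq' x
    rw [show 2 * x = a - b by rw [hx]; ring] at h
    linarith
  have hab : |x| ≤ π / 2 := by
    rw [hx, abs_div, abs_two]
    have h3 : |a - b| ≤ |a| + |b| := abs_sub a b
    linarith
  obtain ⟨hl, hr⟩ := abs_le.1 hab
  have hsinabs : |Real.sin x| = Real.sin |x| := by
    rcases le_or_gt 0 x with h | h
    · rw [abs_of_nonneg h, abs_of_nonneg (Real.sin_nonneg_of_nonneg_of_le_pi h (by linarith))]
    · rw [abs_of_neg h, Real.sin_neg, abs_of_nonpos]
      exact Real.sin_nonpos_of_nonpos_of_neg_pi_le h.le (by linarith)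
  have hsin : 2 / π * |x| ≤ |Real.sin x| := by
    rw [hsinabs]
    exact Real.mul_le_sin (abs_nonneg x) hab
  have hq : (2 / π * |x|) ^ 2 ≤ Real.sin x ^ 2 := by
    rw [← sq_abs (Real.sin x)]
    exact pow_le_pow_left₀ (by positivity) hsin 2
  rw [mul_pow, div_pow, sq_abs] at hq
  have hx2 : (a - b) ^ 2 = 4 * x ^ 2 := by rw [hx]; ring
  rw [h1, hx2]
  have h4 : (2 : ℝ) ^ 2 = 4 := by norm_num
  rw [h4] at hq
  have hπ2 : 0 < π ^ 2 := by positivity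
  rw [div_mul_eq_mul_div, div_le_iff₀ hπ2] at *
  nlinarith

lemma hyperplane_null {N : ℕ} (i j : Fin N) (h : i ≠ j) :
    volume {y : Fin N → ℝ | y i = y j} = 0 := by
  set f : (Fin N → ℝ) →ₗ[ℝ] ℝ := (LinearMap.proj i : (Fin N → ℝ) →ₗ[ℝ] ℝ) - (LinearMap.proj j : (Fin N → ℝ) →ₗ[ℝ] ℝ) with hf
  have heq : {y : Fin N → ℝ | y i = y j} = (LinearMap.ker f : Set (Fin N → ℝ)) := by
    ext y
    simp [hf, LinearMap.mem_ker, sub_eq_zero]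
  rw [heq]
  apply Measure.addHaar_submodule
  intro htop
  have h0 : f = 0 := LinearMap.ker_eq_top.mp htop
  have h1 : f (Pi.single i 1) = 1 := by
    simp [hf, Pi.single_eq_same, Pi.single_eq_of_ne (Ne.symm h)]
  rw [h0] at h1
  simp at h1

lemma integrableOn_of_cont_bdd {N : ℕ} {f : (Fin N → ℝ) → ℝ} (hf : Continuous f)
    {S : Fin N → Set ℝ} (hSm : ∀ i, MeasurableSet (S i)) (hSv : ∀ i, volume (S i) ≠ ⊤)
    {M : ℝ} (hM : ∀ x ∈ Set.univ.pi S, ‖f x‖ ≤ M) :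
    IntegrableOn f (Set.univ.pi S) volume := by
  apply Measure.integrableOn_of_bounded (M := M)
  · rw [volume_pi_pi]
    exact (ENNReal.prod_lt_top (fun i _ => (hSv i).lt_top)).ne
  · exact hf.aestronglyMeasurable
  · exact (ae_restrict_mem (MeasurableSet.univ_pi hSm)).mono hM

lemma smul_box {N : ℕ} {s a : ℝ} (hs : 0 < s) :
    s • (Set.univ.pi fun _ : Fin N => Set.Ioc (-a) a)
      = Set.univ.pi fun _ : Fin N => Set.Ioc (-(s * a)) (s * a) := by
  ext x
  rw [Set.mem_smul_set_iff_inv_smul_mem₀ hs.ne']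
  simp only [Set.mem_pi, Set.mem_univ, true_implies, Pi.smul_apply, smul_eq_mul, Set.mem_Ioc]
  refine forall_congr' fun i => ?_
  have hinv : s * (s⁻¹ * x i) = x i := by field_simp
  rw [← mul_lt_mul_iff_right₀ hs, ← mul_le_mul_iff_right₀ hs, hinv, mul_neg]

lemma nat_sq_identity (N : ℕ) (hN : 1 ≤ N) : 2 * (N * (N - 1) / 2) + N = N ^ 2 := by
  obtain ⟨n, rfl⟩ : ∃ n, N = n + 1 := ⟨N - 1, (Nat.succ_pred_eq_of_pos hN).symm⟩
  simp only [Nat.add_sub_cancel]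
  obtain ⟨k, hk⟩ := Nat.even_mul_succ_self n
  rw [Nat.mul_comm (n + 1) n, hk, show k + k = 2 * k from by ring,
    Nat.mul_div_cancel_left k (by norm_num)]
  have h : (n + 1) ^ 2 = n * (n + 1) + (n + 1) := by ring
  rw [h, hk]
  omega

lemma prod_diff_sq_le {N : ℕ} {b : ℝ} (y : Fin N → ℝ) (hy : ∀ i, |y i| ≤ b) :
    ∏ p ∈ Finset.univ.filter (fun p : Fin N × Fin N => p.1 < p.2), (y p.1 - y p.2) ^ 2
      ≤ ((2 * b) ^ 2) ^ (N * (N - 1) / 2) := by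
  rw [← cardpairs N, ← Finset.prod_const]
  refine Finset.prod_le_prod (fun p _ => sq_nonneg _) (fun p _ => ?_)
  have h1 := hy p.1
  have h2 := hy p.2
  have h3 : |y p.1 - y p.2| ≤ 2 * b := by
    have := abs_sub (y p.1) (y p.2)
    linarith
  calc (y p.1 - y p.2) ^ 2 = |y p.1 - y p.2| ^ 2 := (sq_abs _).symm
    _ ≤ (2 * b) ^ 2 := pow_le_pow_left₀ (abs_nonneg _) h3 2

lemma GUE_pos (N : ℕ) (u : ℝ) (hu : 0 < u) : 0 < GUEIntegral N u := by
  rw [GUEIntegral]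
  have hnn : ∀ y : Fin N → ℝ, 0 ≤ Real.exp (-∑ j, y j ^ 2) *
      ∏ p ∈ Finset.univ.filter (fun p : Fin N × Fin N => p.1 < p.2), (y p.1 - y p.2) ^ 2 :=
    fun y => mul_nonneg (Real.exp_nonneg _) (Finset.prod_nonneg fun p _ => sq_nonneg _)
  have hFc : Continuous (fun y : Fin N → ℝ => Real.exp (-∑ j, y j ^ 2) *
      ∏ p ∈ Finset.univ.filter (fun p : Fin N × Fin N => p.1 < p.2), (y p.1 - y p.2) ^ 2) := by
    fun_prop
  have hint : IntegrableOn (fun y : Fin N → ℝ => Real.exp (-∑ j, y j ^ 2) *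
      ∏ p ∈ Finset.univ.filter (fun p : Fin N × Fin N => p.1 < p.2), (y p.1 - y p.2) ^ 2)
      (Set.univ.pi (fun _ : Fin N => Set.Ioo (-u) u)) volume := by
    refine integrableOn_of_cont_bdd hFc (fun i => measurableSet_Ioo)
      (fun i => by rw [Real.volume_Ioo]; exact ENNReal.ofReal_ne_top)
      (M := ((2 * u) ^ 2) ^ (N * (N - 1) / 2)) (fun y hy => ?_)
    have hyb : ∀ i, |y i| ≤ u := fun i => by
      have := hy i (Set.mem_univ i)
      exact abs_le.mpr ⟨(this.1).le, (this.2).le⟩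
    have hexp : Real.exp (-∑ j, y j ^ 2) ≤ 1 := by
      rw [Real.exp_le_one_iff, neg_nonpos]
      exact Finset.sum_nonneg fun j _ => sq_nonneg _
    rw [Real.norm_eq_abs, abs_of_nonneg (hnn y)]
    calc Real.exp (-∑ j, y j ^ 2) *
          ∏ p ∈ Finset.univ.filter (fun p : Fin N × Fin N => p.1 < p.2), (y p.1 - y p.2) ^ 2
        ≤ 1 * (((2 * u) ^ 2) ^ (N * (N - 1) / 2)) := by
          exact mul_le_mul hexp (prod_diff_sq_le y hyb)
            (Finset.prod_nonneg fun p _ => sq_nonneg _) one_pos.le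
      _ = ((2 * u) ^ 2) ^ (N * (N - 1) / 2) := one_mul _
  rw [setIntegral_pos_iff_support_of_nonneg_ae (Filter.Eventually.of_forall hnn) hint]
  set Z : Set (Fin N → ℝ) := ⋃ (p : Fin N × Fin N) (_ : p.1 ≠ p.2), {y | y p.1 = y p.2} with hZdef
  have hZ : volume Z = 0 := by
    refine measure_iUnion_null fun p => measure_iUnion_null fun hp => hyperplane_null _ _ hp
  have hsub : (Set.univ.pi (fun _ : Fin N => Set.Ioo (-u) u)) \ Z ⊆
      Function.support (fun y : Fin N → ℝ => Real.exp (-∑ j, y j ^ 2) *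
        ∏ p ∈ Finset.univ.filter (fun p : Fin N × Fin N => p.1 < p.2), (y p.1 - y p.2) ^ 2) ∩
      (Set.univ.pi (fun _ : Fin N => Set.Ioo (-u) u)) := by
    rintro y ⟨hyb, hyZ⟩
    refine ⟨?_, hyb⟩
    simp only [Function.mem_support]
    apply ne_of_gt
    apply mul_pos (Real.exp_pos _)
    refine Finset.prod_pos fun p hp => ?_
    have hne : y p.1 ≠ y p.2 := by
      intro hEq
      exact hyZ (Set.mem_iUnion.mpr ⟨p, Set.mem_iUnion.mpr
        ⟨ne_of_lt (Finset.mem_filter.mp hp).2, hEq⟩⟩)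
    exact lt_of_le_of_ne (sq_nonneg _) (Ne.symm (pow_ne_zero 2 (sub_ne_zero.mpr hne)))
  have h1 : volume ((Set.univ.pi (fun _ : Fin N => Set.Ioo (-u) u)) \ Z)
      = volume (Set.univ.pi (fun _ : Fin N => Set.Ioo (-u) u)) := measure_diff_null hZ
  have h2 : 0 < volume (Set.univ.pi (fun _ : Fin N => Set.Ioo (-u) u)) := by
    rw [volume_pi_pi]
    simp only [Real.volume_Ioo, sub_neg_eq_add, Finset.prod_const, Finset.card_univ,
      Fintype.card_fin]
    rw [pos_iff_ne_zero]
    refine pow_ne_zero _ ?_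
    rw [Ne, ENNReal.ofReal_eq_zero, not_le]
    linarith
  exact lt_of_lt_of_le (h1 ▸ h2) (measure_mono hsub)
theorem zl_lower_bound (N : ℕ) (hN : 1 ≤ N) (d : ℕ) (hd : d ∈ ({2, 3, 4} : Set ℕ))
    (g₀ : ℝ) (hg₀ : 0 < g₀) (γ : ℝ) (hγ : 1 / g₀ ^ 2 ≤ γ) :
    (1 / ((2 * π) ^ N * (Nat.factorial N : ℝ))) *
      (∫ lam in Set.univ.pi (fun _ : Fin N => Set.Ioc (-π) π),
        Real.exp (-2 * (4 * N) * ((d : ℝ) - 1) * γ * ∑ j, lam j ^ 2) *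
          ∏ p ∈ Finset.univ.filter (fun p : Fin N × Fin N => p.1 < p.2),
            ‖Complex.exp (Complex.I * lam p.1) -
              Complex.exp (Complex.I * lam p.2)‖ ^ 2) ≥
      γ ^ (-((N : ℝ) ^ 2) / 2) * (1 / ((2 * π) ^ N * (Nat.factorial N : ℝ))) *
        (4 / π ^ 2) ^ (N * (N - 1) / 2) *
        (2 * ((d : ℝ) - 1) * (4 * N)) ^ (-((N : ℝ) ^ 2) / 2) *
        GUEIntegral N (π * Real.sqrt (2 * ((d : ℝ) - 1) * (4 * N)) / (2 * g₀)) ∧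
    0 < γ ^ (-((N : ℝ) ^ 2) / 2) * (1 / ((2 * π) ^ N * (Nat.factorial N : ℝ))) *
        (4 / π ^ 2) ^ (N * (N - 1) / 2) *
        (2 * ((d : ℝ) - 1) * (4 * N)) ^ (-((N : ℝ) ^ 2) / 2) *
        GUEIntegral N (π * Real.sqrt (2 * ((d : ℝ) - 1) * (4 * N)) / (2 * g₀)) := by
  have hπ : 0 < π := Real.pi_pos
  simp only [Set.mem_insert_iff, Set.mem_singleton_iff] at hd
  have hd1 : (1 : ℝ) ≤ (d : ℝ) - 1 := by rcases hd with rfl | rfl | rfl <;> norm_num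
  have hNpos : (0 : ℝ) < N := by exact_mod_cast Nat.lt_of_lt_of_le Nat.zero_lt_one hN
  have hγpos : 0 < γ := lt_of_lt_of_le (by positivity) hγ
  set A : ℝ := 2 * ((d : ℝ) - 1) * (4 * N) with hA
  have hApos : 0 < A := by rw [hA]; positivity
  set s : ℝ := Real.sqrt (A * γ) with hs
  have hspos : 0 < s := Real.sqrt_pos.mpr (by positivity)
  have hs2 : s ^ 2 = A * γ := Real.sq_sqrt (by positivity)
  set u : ℝ := π * Real.sqrt A / (2 * g₀) with hu
  have hupos : 0 < u := by rw [hu]; positivity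
  have huspi : u ≤ s * (π / 2) := by
    have hsqγ : 1 / g₀ ≤ Real.sqrt γ := by
      have he : Real.sqrt (1 / g₀ ^ 2) = 1 / g₀ := by
        rw [one_div, one_div, Real.sqrt_inv, Real.sqrt_sq hg₀.le]
      rw [← he]
      exact Real.sqrt_le_sqrt hγ
    have hsmul : s = Real.sqrt A * Real.sqrt γ := by rw [hs, Real.sqrt_mul hApos.le]
    have h1 : 1 ≤ Real.sqrt γ * g₀ := by
      rw [← div_le_iff₀ hg₀] at *
      linarith [hsqγ]
    rw [hu, hsmul, div_le_iff₀ (by positivity : (0:ℝ) < 2 * g₀)]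
    have hsA : 0 ≤ Real.sqrt A := Real.sqrt_nonneg A
    nlinarith [mul_le_mul_of_nonneg_left h1 (mul_nonneg hsA hπ.le)]
  set pairs : Finset (Fin N × Fin N) := Finset.univ.filter (fun p : Fin N × Fin N => p.1 < p.2)
    with hpairs
  set c : ℝ := 4 / π ^ 2 with hc
  have hcpos : 0 < c := by rw [hc]; positivity
  set M' : ℕ := N * (N - 1) / 2 with hM'
  have hcard : pairs.card = M' := cardpairs N
  set F : (Fin N → ℝ) → ℝ := fun y =>
    Real.exp (-∑ j, y j ^ 2) * ∏ p ∈ pairs, (y p.1 - y p.2) ^ 2 with hF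
  set G : (Fin N → ℝ) → ℝ := fun lam =>
    Real.exp (-2 * (4 * N) * ((d : ℝ) - 1) * γ * ∑ j, lam j ^ 2) *
      ∏ p ∈ pairs, ‖Complex.exp (Complex.I * lam p.1) -
        Complex.exp (Complex.I * lam p.2)‖ ^ 2 with hG
  set H : (Fin N → ℝ) → ℝ := fun lam =>
    Real.exp (-2 * (4 * N) * ((d : ℝ) - 1) * γ * ∑ j, lam j ^ 2) *
      ∏ p ∈ pairs, (lam p.1 - lam p.2) ^ 2 with hH
  set B1 : Set (Fin N → ℝ) := Set.univ.pi (fun _ : Fin N => Set.Ioc (-π) π) with hB1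
  set B2 : Set (Fin N → ℝ) := Set.univ.pi (fun _ : Fin N => Set.Ioc (-(π/2)) (π/2)) with hB2
  set B3 : Set (Fin N → ℝ) := Set.univ.pi
    (fun _ : Fin N => Set.Ioc (-(s * (π/2))) (s * (π/2))) with hB3
  set B4 : Set (Fin N → ℝ) := Set.univ.pi (fun _ : Fin N => Set.Ioo (-u) u) with hB4
  have hKdef : GUEIntegral N u = ∫ y in B4, F y := rfl
  have hB2meas : MeasurableSet B2 := by
    rw [hB2]; exact MeasurableSet.univ_pi fun i => measurableSet_Ioc
  -- nonnegativity
  have hFnn : ∀ y, 0 ≤ F y := fun y =>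
    mul_nonneg (Real.exp_nonneg _) (Finset.prod_nonneg fun p _ => sq_nonneg _)
  have hGnn : ∀ lam, 0 ≤ G lam := fun lam =>
    mul_nonneg (Real.exp_nonneg _)
      (Finset.prod_nonneg fun p _ => pow_nonneg (norm_nonneg _) 2)
  have hHnn : ∀ lam, 0 ≤ H lam := fun lam =>
    mul_nonneg (Real.exp_nonneg _) (Finset.prod_nonneg fun p _ => sq_nonneg _)
  -- continuity
  have hFc : Continuous F := by rw [hF]; fun_prop
  have hHc : Continuous H := by rw [hH]; fun_prop
  have hGc : Continuous G := by
    rw [hG]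
    apply Continuous.mul (by fun_prop)
    apply continuous_finset_prod
    intro p _
    exact (continuous_norm.comp (by fun_prop)).pow 2
  -- exponential factor at most one
  have hexpG : ∀ lam : Fin N → ℝ,
      Real.exp (-2 * (4 * N) * ((d : ℝ) - 1) * γ * ∑ j, lam j ^ 2) ≤ 1 := by
    intro lam
    rw [Real.exp_le_one_iff]
    have hsum : (0:ℝ) ≤ ∑ j, lam j ^ 2 := Finset.sum_nonneg fun j _ => sq_nonneg _
    have h0 : (0:ℝ) ≤ 2 * (4 * N) * ((d : ℝ) - 1) * γ * ∑ j, lam j ^ 2 :=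
      mul_nonneg (mul_nonneg (mul_nonneg (by positivity) (by linarith)) hγpos.le) hsum
    nlinarith [h0]
  -- bound on G
  have hGbd : ∀ x : Fin N → ℝ, ‖G x‖ ≤ 4 ^ M' := by
    intro lam
    have habs : ∀ p ∈ pairs,
        ‖Complex.exp (Complex.I * lam p.1) -
          Complex.exp (Complex.I * lam p.2)‖ ^ 2 ≤ 4 := by
      intro p _
      have h1 : ∀ r : ℝ, ‖Complex.exp (Complex.I * r)‖ = 1 := by
        intro r
        rw [Complex.norm_exp]
        simp [Complex.mul_re]
      have ht : ‖Complex.exp (Complex.I * lam p.1) -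
          Complex.exp (Complex.I * lam p.2)‖ ≤ 2 := by
        have h2 := norm_sub_le (Complex.exp (Complex.I * lam p.1))
          (Complex.exp (Complex.I * lam p.2))
        rw [h1, h1] at h2
        linarith
      calc ‖Complex.exp (Complex.I * lam p.1) -
            Complex.exp (Complex.I * lam p.2)‖ ^ 2
          ≤ 2 ^ 2 := pow_le_pow_left₀ (norm_nonneg _) ht 2
        _ = 4 := by norm_num
    rw [Real.norm_eq_abs, abs_of_nonneg (hGnn lam)]
    simp only [hG]
    calc Real.exp (-2 * (4 * N) * ((d : ℝ) - 1) * γ * ∑ j, lam j ^ 2) *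
          ∏ p ∈ pairs, ‖Complex.exp (Complex.I * lam p.1) -
            Complex.exp (Complex.I * lam p.2)‖ ^ 2
        ≤ 1 * ∏ p ∈ pairs, (4:ℝ) := by
          exact mul_le_mul (hexpG lam) (Finset.prod_le_prod
            (fun p _ => pow_nonneg (norm_nonneg _) 2) habs)
            (Finset.prod_nonneg fun p _ => pow_nonneg (norm_nonneg _) 2) one_pos.le
      _ = 4 ^ M' := by rw [one_mul, Finset.prod_const, hcard]
  -- integrability
  have hvIoc : ∀ a b : ℝ, volume (Set.Ioc a b) ≠ ⊤ := fun a b => by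
    rw [Real.volume_Ioc]; exact ENNReal.ofReal_ne_top
  have hIntG1 : IntegrableOn G B1 volume := by
    rw [hB1]
    exact integrableOn_of_cont_bdd hGc (fun i => measurableSet_Ioc) (fun i => hvIoc _ _)
      (fun x _ => hGbd x)
  have hIntG2 : IntegrableOn G B2 volume := by
    rw [hB2]
    exact integrableOn_of_cont_bdd hGc (fun i => measurableSet_Ioc) (fun i => hvIoc _ _)
      (fun x _ => hGbd x)
  have hIntH2 : IntegrableOn H B2 volume := by
    rw [hB2]
    refine integrableOn_of_cont_bdd hHc (fun i => measurableSet_Ioc) (fun i => hvIoc _ _)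
      (M := ((2 * (π/2)) ^ 2) ^ (N * (N - 1) / 2)) (fun x hx => ?_)
    have hxb : ∀ i, |x i| ≤ π / 2 := fun i => by
      have h := hx i (Set.mem_univ i)
      exact abs_le.mpr ⟨h.1.le, h.2⟩
    rw [Real.norm_eq_abs, abs_of_nonneg (hHnn x)]
    simp only [hH]
    calc Real.exp (-2 * (4 * N) * ((d : ℝ) - 1) * γ * ∑ j, x j ^ 2) *
          ∏ p ∈ pairs, (x p.1 - x p.2) ^ 2
        ≤ 1 * (((2 * (π/2)) ^ 2) ^ (N * (N - 1) / 2)) := by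
          refine mul_le_mul (hexpG x) ?_
            (Finset.prod_nonneg fun p _ => sq_nonneg _) one_pos.le
          rw [hpairs]
          exact prod_diff_sq_le x hxb
      _ = ((2 * (π/2)) ^ 2) ^ (N * (N - 1) / 2) := one_mul _
  have hIntF3 : IntegrableOn F B3 volume := by
    rw [hB3]
    refine integrableOn_of_cont_bdd hFc (fun i => measurableSet_Ioc) (fun i => hvIoc _ _)
      (M := ((2 * (s * (π/2))) ^ 2) ^ (N * (N - 1) / 2)) (fun x hx => ?_)
    have hxb : ∀ i, |x i| ≤ s * (π/2) := fun i => by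
      have h := hx i (Set.mem_univ i)
      exact abs_le.mpr ⟨h.1.le, h.2⟩
    have hexp : Real.exp (-∑ j, x j ^ 2) ≤ 1 := by
      rw [Real.exp_le_one_iff, neg_nonpos]
      exact Finset.sum_nonneg fun j _ => sq_nonneg _
    rw [Real.norm_eq_abs, abs_of_nonneg (hFnn x)]
    simp only [hF]
    calc Real.exp (-∑ j, x j ^ 2) * ∏ p ∈ pairs, (x p.1 - x p.2) ^ 2
        ≤ 1 * (((2 * (s * (π/2))) ^ 2) ^ (N * (N - 1) / 2)) := by
          refine mul_le_mul hexp ?_ (Finset.prod_nonneg fun p _ => sq_nonneg _) one_pos.le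
          rw [hpairs]
          exact prod_diff_sq_le x hxb
      _ = ((2 * (s * (π/2))) ^ 2) ^ (N * (N - 1) / 2) := one_mul _
  -- homogeneity
  have key : ∀ lam : Fin N → ℝ, F (s • lam) = s ^ (2 * M') * H lam := by
    intro lam
    simp only [hF, hH, Pi.smul_apply, smul_eq_mul]
    have h1 : ∑ j, (s * lam j) ^ 2 = s ^ 2 * ∑ j, lam j ^ 2 := by
      rw [Finset.mul_sum]; exact Finset.sum_congr rfl fun j _ => by ring
    have h2 : ∏ p ∈ pairs, (s * lam p.1 - s * lam p.2) ^ 2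
        = (s ^ 2) ^ M' * ∏ p ∈ pairs, (lam p.1 - lam p.2) ^ 2 := by
      rw [← hcard, ← Finset.prod_const (s ^ 2), ← Finset.prod_mul_distrib]
      exact Finset.prod_congr rfl fun p _ => by ring
    have h3 : -(A * γ * ∑ j, lam j ^ 2)
        = -2 * (4 * N) * ((d : ℝ) - 1) * γ * ∑ j, lam j ^ 2 := by rw [hA]; ring
    rw [h1, h2, hs2, pow_mul, hs2, h3]
    ring
  have hIntFs2 : IntegrableOn (fun lam => F (s • lam)) B2 volume := by
    have he : (fun lam : Fin N → ℝ => F (s • lam)) = fun lam => s ^ (2 * M') * H lam :=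
      funext key
    rw [he]
    exact hIntH2.const_mul _
  -- chain of inequalities
  have step1 : ∫ lam in B2, G lam ≤ ∫ lam in B1, G lam := by
    refine setIntegral_mono_set hIntG1 (Filter.Eventually.of_forall fun lam => hGnn lam)
      (HasSubset.Subset.eventuallyLE ?_)
    rw [hB1, hB2]
    exact Set.pi_mono fun i _ => Set.Ioc_subset_Ioc (by linarith) (by linarith)
  have step2 : c ^ M' * ∫ lam in B2, H lam ≤ ∫ lam in B2, G lam := by
    rw [← MeasureTheory.integral_const_mul]
    refine setIntegral_mono_on (hIntH2.const_mul _) hIntG2 hB2meas fun lam hlam => ?_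
    rw [hB2] at hlam
    have hxb : ∀ i, |lam i| ≤ π / 2 := fun i => by
      have h := hlam i (Set.mem_univ i)
      exact abs_le.mpr ⟨h.1.le, h.2⟩
    simp only [hG, hH]
    calc c ^ M' * (Real.exp (-2 * (4 * N) * ((d : ℝ) - 1) * γ * ∑ j, lam j ^ 2) *
          ∏ p ∈ pairs, (lam p.1 - lam p.2) ^ 2)
        = Real.exp (-2 * (4 * N) * ((d : ℝ) - 1) * γ * ∑ j, lam j ^ 2) *
          ∏ p ∈ pairs, (c * (lam p.1 - lam p.2) ^ 2) := by
          rw [Finset.prod_mul_distrib, Finset.prod_const, hcard]; ring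
      _ ≤ Real.exp (-2 * (4 * N) * ((d : ℝ) - 1) * γ * ∑ j, lam j ^ 2) *
          ∏ p ∈ pairs, ‖Complex.exp (Complex.I * lam p.1) -
            Complex.exp (Complex.I * lam p.2)‖ ^ 2 := by
          refine mul_le_mul_of_nonneg_left (Finset.prod_le_prod
            (fun p _ => mul_nonneg hcpos.le (sq_nonneg _)) fun p _ => ?_)
            (Real.exp_nonneg _)
          rw [hc]
          exact key_sin _ _ (hxb p.1) (hxb p.2)
  have step3 : ∫ lam in B2, H lam = (s ^ (2 * M'))⁻¹ * ∫ lam in B2, F (s • lam) := by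
    rw [← MeasureTheory.integral_const_mul]
    refine integral_congr_ae (Filter.Eventually.of_forall fun lam => ?_)
    show H lam = (s ^ (2 * M'))⁻¹ * F (s • lam)
    rw [key lam, ← mul_assoc, inv_mul_cancel₀ (pow_ne_zero _ hspos.ne'), one_mul]
  have step4 : ∫ lam in B2, F (s • lam) = (s ^ N)⁻¹ * ∫ y in B3, F y := by
    have h := Measure.setIntegral_comp_smul_of_pos volume F B2 hspos
    have hset : s • B2 = B3 := by rw [hB2, hB3]; exact smul_box hspos
    rw [h, hset, smul_eq_mul, show Module.finrank ℝ (Fin N → ℝ) = N from by simp]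
  have step5 : GUEIntegral N u ≤ ∫ y in B3, F y := by
    rw [hKdef]
    refine setIntegral_mono_set hIntF3 (Filter.Eventually.of_forall fun y => hFnn y)
      (HasSubset.Subset.eventuallyLE ?_)
    rw [hB3, hB4]
    refine Set.pi_mono fun i _ => ?_
    intro x hx
    exact ⟨lt_of_le_of_lt (by linarith [hx.1]) hx.1, le_trans hx.2.le huspi⟩
  have step6 : 0 < GUEIntegral N u := GUE_pos N u hupos
  -- prefactor computation
  have hprefac : γ ^ (-((N : ℝ) ^ 2) / 2) * A ^ (-((N : ℝ) ^ 2) / 2) = (s ^ (N ^ 2))⁻¹ := by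
    rw [← Real.mul_rpow hγpos.le hApos.le]
    have h1 : s ^ (N ^ 2) = (γ * A) ^ (((N ^ 2 : ℕ) : ℝ) / 2) := by
      rw [hs, mul_comm A γ, Real.sqrt_eq_rpow,
        ← Real.rpow_natCast ((γ * A) ^ ((1:ℝ) / 2)) (N ^ 2), ← Real.rpow_mul (by positivity)]
      congr 1
      ring
    rw [h1, ← Real.rpow_neg (by positivity)]
    congr 1
    push_cast
    ring
  have hspow : (s ^ (2 * M'))⁻¹ * (s ^ N)⁻¹ = (s ^ (N ^ 2))⁻¹ := by
    rw [← mul_inv, ← pow_add]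
    congr 2
    rw [hM']
    exact nat_sq_identity N hN
  have chain : c ^ M' * ((s ^ (N ^ 2))⁻¹ * GUEIntegral N u) ≤ ∫ lam in B1, G lam := by
    have e1 : c ^ M' * ((s ^ (N ^ 2))⁻¹ * GUEIntegral N u)
        = c ^ M' * ((s ^ (2 * M'))⁻¹ * ((s ^ N)⁻¹ * GUEIntegral N u)) := by
      rw [← hspow]; ring
    rw [e1]
    calc c ^ M' * ((s ^ (2 * M'))⁻¹ * ((s ^ N)⁻¹ * GUEIntegral N u))
        ≤ c ^ M' * ((s ^ (2 * M'))⁻¹ * ((s ^ N)⁻¹ * ∫ y in B3, F y)) := by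
          refine mul_le_mul_of_nonneg_left (mul_le_mul_of_nonneg_left
            (mul_le_mul_of_nonneg_left step5 (by positivity)) (by positivity)) (by positivity)
      _ = c ^ M' * ∫ lam in B2, H lam := by rw [step3, step4]
      _ ≤ ∫ lam in B2, G lam := step2
      _ ≤ ∫ lam in B1, G lam := step1
  constructor
  · have hC0 : 0 ≤ 1 / ((2 * π) ^ N * (Nat.factorial N : ℝ)) := by positivity
    have hRHSeq : γ ^ (-((N : ℝ) ^ 2) / 2) * (1 / ((2 * π) ^ N * (Nat.factorial N : ℝ))) *
          c ^ M' * A ^ (-((N : ℝ) ^ 2) / 2) * GUEIntegral N u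
        = (1 / ((2 * π) ^ N * (Nat.factorial N : ℝ))) *
          (c ^ M' * ((s ^ (N ^ 2))⁻¹ * GUEIntegral N u)) := by
      rw [← hprefac]; ring
    rw [ge_iff_le, hRHSeq]
    exact mul_le_mul_of_nonneg_left chain hC0
  · have h1 : 0 < γ ^ (-((N : ℝ) ^ 2) / 2) := Real.rpow_pos_of_pos hγpos _
    have h2 : 0 < 1 / ((2 * π) ^ N * (Nat.factorial N : ℝ)) := by positivity
    have h4 : 0 < A ^ (-((N : ℝ) ^ 2) / 2) := Real.rpow_pos_of_pos hApos _
    exact mul_pos (mul_pos (mul_pos (mul_pos h1 h2) (pow_pos hcpos M')) h4) step6
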